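/- Let β, b₁, b₂, c₁, c₂ > 0, let t > 0, and let L₁, L₂, G₁, G₂, X, Y : [0,t] → (0,∞) be continuous functions satisfying: (i) L₁(s) = G₁(s)/(1 + b₁∫₀ˢG₁(r)dr) and L₂(s) = G₂(s)/(1 + b₂∫₀ˢG₂(r)dr) for all s ∈ [0,t]; (ii) X(s) ≤ L₁(s) and Y(s) ≥ L₂(s) for all s; (iii) Y(s)/L₂(s) = exp( b₂∫₀ˢ(L₂(r) − Y(r))dr + c₂∫₀ˢ X(r)/(β + Y(r)) dr ) for all s. Then Y(t) ≤ L₂(t)·(1 + b₁∫₀ᵗ G₁(r)dr)^{c₂/(βb₁)}. -/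

import Mathlib

open Real MeasureTheory intervalIntegral Set

/-- deterministic core of the upper bound on the predator:
`Y(t) ≤ L₂(t)·(1 + b₁∫₀ᵗ G₁)^{c₂/(βb₁)}`. -/
theorem stmt14 (β b₁ b₂ c₁ c₂ t : ℝ) (hβ : 0 < β) (hb₁ : 0 < b₁) (hb₂ : 0 < b₂)
    (hc₁ : 0 < c₁) (hc₂ : 0 < c₂) (ht : 0 < t)
    (L₁ L₂ G₁ G₂ X Y : ℝ → ℝ)
    (hL₁c : Continuous L₁) (hL₂c : Continuous L₂) (hG₁c : Continuous G₁)
    (hG₂c : Continuous G₂) (hXc : Continuous X) (hYc : Continuous Y)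
    (hL₁pos : ∀ s ∈ Icc (0:ℝ) t, 0 < L₁ s) (hL₂pos : ∀ s ∈ Icc (0:ℝ) t, 0 < L₂ s)
    (hG₁pos : ∀ s ∈ Icc (0:ℝ) t, 0 < G₁ s) (hG₂pos : ∀ s ∈ Icc (0:ℝ) t, 0 < G₂ s)
    (hXpos : ∀ s ∈ Icc (0:ℝ) t, 0 < X s) (hYpos : ∀ s ∈ Icc (0:ℝ) t, 0 < Y s)
    (hL₁ : ∀ s ∈ Icc (0:ℝ) t, L₁ s = G₁ s / (1 + b₁ * ∫ r in (0:ℝ)..s, G₁ r))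
    (hL₂ : ∀ s ∈ Icc (0:ℝ) t, L₂ s = G₂ s / (1 + b₂ * ∫ r in (0:ℝ)..s, G₂ r))
    (hXL : ∀ s ∈ Icc (0:ℝ) t, X s ≤ L₁ s) (hYL : ∀ s ∈ Icc (0:ℝ) t, L₂ s ≤ Y s)
    (hexp : ∀ s ∈ Icc (0:ℝ) t, Y s / L₂ s =
      Real.exp ((b₂ * ∫ r in (0:ℝ)..s, (L₂ r - Y r)) +
        c₂ * ∫ r in (0:ℝ)..s, X r / (β + Y r))) :
    Y t ≤ L₂ t * (1 + b₁ * ∫ r in (0:ℝ)..t, G₁ r) ^ (c₂ / (β * b₁)) := by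
  have htIcc : t ∈ Icc (0:ℝ) t := ⟨ht.le, le_rfl⟩
  set F : ℝ → ℝ := fun s => ∫ r in (0:ℝ)..s, G₁ r with hF
  -- positivity of 1 + b₁ F s on [0,t]
  have hFnonneg : ∀ s ∈ Icc (0:ℝ) t, 0 ≤ F s := by
    intro s hs
    exact intervalIntegral.integral_nonneg hs.1
      (fun r hr => (hG₁pos r ⟨hr.1, hr.2.trans hs.2⟩).le)
  have hden : ∀ s ∈ Icc (0:ℝ) t, (0:ℝ) < 1 + b₁ * F s := by
    intro s hs
    nlinarith [hFnonneg s hs]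
  -- compute ∫₀ᵗ L₁ = (1/b₁) log (1 + b₁ F t)
  have hFderiv : ∀ s ∈ Icc (0:ℝ) t, HasDerivAt F (G₁ s) s := by
    intro s hs
    exact intervalIntegral.integral_hasDerivAt_right
      (hG₁c.intervalIntegrable 0 s)
      hG₁c.aestronglyMeasurable.stronglyMeasurableAtFilter
      hG₁c.continuousAt
  have hgderiv : ∀ s ∈ Icc (0:ℝ) t,
      HasDerivAt (fun u => (1 / b₁) * Real.log (1 + b₁ * F u)) (L₁ s) s := by
    intro s hs
    have h1 : HasDerivAt (fun u => 1 + b₁ * F u) (b₁ * G₁ s) s :=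
      ((hFderiv s hs).const_mul b₁).const_add 1
    have h2 := (h1.log (hden s hs).ne').const_mul (1 / b₁)
    refine h2.congr_deriv ?_
    rw [hL₁ s hs]
    field_simp
    rfl
  have hintL₁ : (∫ r in (0:ℝ)..t, L₁ r) = (1 / b₁) * Real.log (1 + b₁ * F t) := by
    have := intervalIntegral.integral_eq_sub_of_hasDerivAt
      (f := fun u => (1 / b₁) * Real.log (1 + b₁ * F u)) (f' := L₁)
      (a := 0) (b := t) ?_ (hL₁c.intervalIntegrable 0 t)
    · rw [this]
      simp [hF, intervalIntegral.integral_same]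
    · intro s hs
      rw [uIcc_of_le ht.le] at hs
      exact hgderiv s hs
  -- the two exponent bounds
  have hA : b₂ * (∫ r in (0:ℝ)..t, (L₂ r - Y r)) ≤ 0 := by
    have : (∫ r in (0:ℝ)..t, (L₂ r - Y r)) ≤ ∫ r in (0:ℝ)..t, (0:ℝ) := by
      apply intervalIntegral.integral_mono_on ht.le
        ((hL₂c.sub hYc).intervalIntegrable 0 t)
        (intervalIntegrable_const)
      intro r hr
      simpa using hYL r hr
    simp only [intervalIntegral.integral_zero] at this
    exact mul_nonpos_of_nonneg_of_nonpos hb₂.le this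
  have hB : (∫ r in (0:ℝ)..t, X r / (β + Y r)) ≤ ∫ r in (0:ℝ)..t, L₁ r / β := by
    apply intervalIntegral.integral_mono_on ht.le
    · apply ContinuousOn.intervalIntegrable
      rw [uIcc_of_le ht.le]
      exact (hXc.continuousOn).div ((continuous_const.add hYc).continuousOn)
        (fun r hr => by have := hYpos r hr; positivity)
    · exact (hL₁c.div_const β).intervalIntegrable 0 t
    · intro r hr
      have hY := hYpos r hr
      have hβY : (0:ℝ) < β + Y r := by linarith
      calc X r / (β + Y r) ≤ X r / β := by
            apply div_le_div_of_nonneg_left (hXpos r hr).le hβ (by linarith)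
        _ ≤ L₁ r / β := by
            exact div_le_div_of_nonneg_right (hXL r hr) hβ.le
  -- final assembly
  have hLt := hL₂pos t htIcc
  have hYt : Y t = L₂ t * Real.exp ((b₂ * ∫ r in (0:ℝ)..t, (L₂ r - Y r)) +
      c₂ * ∫ r in (0:ℝ)..t, X r / (β + Y r)) := by
    have := hexp t htIcc
    field_simp at this
    linarith [this]
  rw [hYt]
  apply mul_le_mul_of_nonneg_left _ hLt.le
  rw [Real.rpow_def_of_pos (hden t htIcc)]
  apply Real.exp_le_exp.mpr
  have hintdiv : (∫ r in (0:ℝ)..t, L₁ r / β) = (1 / b₁) * Real.log (1 + b₁ * F t) / β := by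
    rw [intervalIntegral.integral_div, hintL₁]
  have hB' : c₂ * (∫ r in (0:ℝ)..t, X r / (β + Y r)) ≤
      c₂ * ((1 / b₁) * Real.log (1 + b₁ * F t) / β) := by
    rw [← hintdiv]
    exact mul_le_mul_of_nonneg_left hB hc₂.le
  have : c₂ * ((1 / b₁) * Real.log (1 + b₁ * F t) / β) =
      Real.log (1 + b₁ * F t) * (c₂ / (β * b₁)) := by
    field_simp
  linarith [hA, hB', this.le, this.ge]
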